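/- Let L be an n×n ICB matrix. Then the rank of L over ℚ equals n−1, and every entry of the adjugate matrix adj(L) is strictly positive. -/

import Mathlib

open Finset

/-- A critical binomial (CB) matrix. -/
def IsCB (n : ℕ) (L : Matrix (Fin n) (Fin n) ℤ) : Prop :=
  (∀ i, 0 < L i i) ∧ (∀ i j : Fin n, i ≠ j → L i j ≤ 0) ∧ (∀ i, ∑ j, L i j = 0) ∧
    (∀ j, ∃ i, i ≠ j ∧ L i j ≠ 0)

/-- Irreducibility of a square matrix. -/
def IsIrreducibleMat {n : ℕ} (M : Matrix (Fin n) (Fin n) ℤ) : Prop :=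
  ¬ ∃ I J : Set (Fin n), I.Nonempty ∧ J.Nonempty ∧ Disjoint I J ∧ I ∪ J = Set.univ ∧
      ∀ i ∈ I, ∀ j ∈ J, M i j = 0

def IsICB (n : ℕ) (L : Matrix (Fin n) (Fin n) ℤ) : Prop := IsCB n L ∧ IsIrreducibleMat L

section Aux

variable {n : ℕ}

/-- From irreducibility: no nonempty proper "closed" set. -/
lemma icb_connect {L : Matrix (Fin n) (Fin n) ℤ} (h : IsIrreducibleMat L)
    (S : Set (Fin n)) (hS : S.Nonempty) (hS' : Sᶜ.Nonempty)
    (hcl : ∀ i ∈ S, ∀ j, j ∉ S → L i j = 0) : False :=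
  h ⟨S, Sᶜ, hS, hS', disjoint_compl_right, Set.union_compl_self S,
    fun i hi j hj => hcl i hi j hj⟩

/-- Maximum principle: kernel vectors of an ICB matrix (over a linearly ordered field)
are constant. -/
lemma icb_ker_const {F : Type*} [Field F] [LinearOrder F] [IsStrictOrderedRing F] {L : Matrix (Fin n) (Fin n) ℤ}
    (hL : IsICB n L) (hn : 0 < n) (x : Fin n → F)
    (hx : (L.map ((↑) : ℤ → F)).mulVec x = 0) : ∀ i k, x i = x k := by
  obtain ⟨⟨hdiag, hoff, hrow, -⟩, hirr⟩ := hL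
  obtain ⟨i₀, -, hi₀⟩ := Finset.exists_max_image (univ : Finset (Fin n)) x
    ⟨⟨0, hn⟩, mem_univ _⟩
  set m := x i₀ with hm
  suffices hall : ∀ k, x k = m by intro i k; rw [hall i, hall k]
  by_contra hne
  push_neg at hne
  obtain ⟨k₀, hk₀⟩ := hne
  have hclosed : ∀ i, x i = m → ∀ j, L i j ≠ 0 → x j = m := by
    intro i hi j hj
    have h0 : ∑ k, ((L i k : F)) * x k = 0 := by
      have := congrFun hx i
      simpa [Matrix.mulVec, dotProduct, Matrix.map_apply] using this
    have hrs : ∑ k, ((L i k : F)) = 0 := by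
      have : ((∑ k, L i k : ℤ) : F) = 0 := by rw [hrow i]; norm_num
      push_cast at this
      exact this
    have h1 : ∑ k, ((L i k : F)) * (x k - m) = 0 := by
      have heq : ∑ k, ((L i k : F)) * (x k - m)
          = (∑ k, ((L i k : F)) * x k) - (∑ k, ((L i k : F))) * m := by
        rw [Finset.sum_mul, ← Finset.sum_sub_distrib]
        congr 1; ext k; ring
      rw [heq, h0, hrs]; ring
    have hnn : ∀ k ∈ (univ : Finset (Fin n)), 0 ≤ ((L i k : F)) * (x k - m) := by
      intro k _
      by_cases hk : k = i
      · subst hk; rw [hi]; simp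
      · have h1' : ((L i k : F)) ≤ 0 := by
          exact_mod_cast hoff i k (fun h => hk h.symm)
        have h2' : x k - m ≤ 0 := sub_nonpos.mpr (hi₀ k (mem_univ k))
        have := mul_nonneg (neg_nonneg.mpr h1') (neg_nonneg.mpr h2')
        rwa [neg_mul_neg] at this
    have hz := (Finset.sum_eq_zero_iff_of_nonneg hnn).mp h1 j (mem_univ j)
    have hLj : ((L i j : F)) ≠ 0 := by exact_mod_cast hj
    have := (mul_eq_zero.mp hz).resolve_left hLj
    linarith [sub_eq_zero.mp this]
  refine icb_connect hirr {k | x k = m} ⟨i₀, rfl⟩ ⟨k₀, hk₀⟩ ?_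
  intro i hi j hj
  by_contra hLij
  exact hj (hclosed i hi j hLij)

/-- Over ℝ: the matrix `t•1 + (L + E_jj)` has trivial kernel for `t ≥ 0`. -/
lemma icb_shift_ker {L : Matrix (Fin n) (Fin n) ℤ} (hL : IsICB n L) (j : Fin n)
    (t : ℝ) (ht : 0 ≤ t) (x : Fin n → ℝ)
    (hx : (t • (1 : Matrix (Fin n) (Fin n) ℝ)
        + (L.map ((↑) : ℤ → ℝ) + Matrix.single j j 1)).mulVec x = 0) :
    x = 0 := by
  obtain ⟨⟨hdiag, hoff, hrow, -⟩, hirr⟩ := hL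
  set Mt : Matrix (Fin n) (Fin n) ℝ :=
    t • (1 : Matrix (Fin n) (Fin n) ℝ)
      + (L.map ((↑) : ℤ → ℝ) + Matrix.single j j 1) with hMt
  by_contra hx0
  obtain ⟨k₁, hk₁⟩ : ∃ k, x k ≠ 0 := by
    by_contra h
    push_neg at h
    exact hx0 (funext h)
  obtain ⟨i₀, -, hi₀⟩ := Finset.exists_max_image (univ : Finset (Fin n)) (fun k => |x k|)
    ⟨k₁, mem_univ _⟩
  set m := |x i₀| with hm
  have hmpos : 0 < m := lt_of_lt_of_le (abs_pos.mpr hk₁) (hi₀ k₁ (mem_univ _))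
  have happ : ∀ i k, Mt i k
      = (if i = k then t else 0) + (L i k : ℝ) + (if j = i ∧ j = k then 1 else 0) := by
    intro i k
    simp only [hMt, Matrix.add_apply, Matrix.smul_apply, Matrix.one_apply,
      Matrix.single, Matrix.of_apply, Matrix.map_apply, smul_eq_mul]
    by_cases h : i = k <;> simp [h] <;> ring
  have hclosed : ∀ i, |x i| = m → i ≠ j ∧ ∀ k, L i k ≠ 0 → |x k| = m := by
    intro i hi
    have h0 : ∑ k, Mt i k * x k = 0 := by
      have := congrFun hx i
      simpa [Matrix.mulVec, dotProduct, hMt] using this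
    set ε : ℝ := if i = j then 1 else 0 with hε
    have h0' : ∑ k ∈ univ.erase i, Mt i k * x k + Mt i i * x i = 0 := by
      rw [Finset.sum_erase_add _ _ (mem_univ i)]
      exact h0
    have hdiagterm : Mt i i = t + (L i i : ℝ) + ε := by
      rw [happ]
      by_cases h : i = j
      · subst h; simp [hε]
      · have h'' : ¬ j = i := fun hh => h hh.symm
        simp [hε, h, h'']
    have hoffterm : ∀ k ∈ univ.erase i, Mt i k * x k = ((L i k : ℝ)) * x k := by
      intro k hk
      have hki : k ≠ i := (Finset.mem_erase.mp hk).1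
      have hcond : ¬ (j = i ∧ j = k) := fun ⟨h1', h2'⟩ => hki (h2'.symm.trans h1')
      have hik : ¬ i = k := fun h => hki h.symm
      rw [happ]
      simp [hik, hcond]
    have hsplit : (t + (L i i : ℝ) + ε) * x i
        + ∑ k ∈ univ.erase i, ((L i k : ℝ)) * x k = 0 := by
      rw [← hdiagterm, ← Finset.sum_congr rfl hoffterm]
      linarith [h0']
    set c : ℝ := t + (L i i : ℝ) + ε with hc
    have hεnn : 0 ≤ ε := by rw [hε]; split <;> norm_num
    have hLiipos : (0 : ℝ) < (L i i : ℝ) := by exact_mod_cast hdiag i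
    have hcpos : 0 < c := by rw [hc]; linarith
    have hrs : ∑ k ∈ univ.erase i, (-(L i k : ℝ)) = (L i i : ℝ) := by
      have h1 : ((∑ k, L i k : ℤ) : ℝ) = 0 := by rw [hrow i]; norm_num
      push_cast at h1
      rw [← Finset.sum_erase_add _ _ (mem_univ i)] at h1
      have h2 : ∑ k ∈ univ.erase i, (-(L i k : ℝ))
          = -∑ k ∈ univ.erase i, ((L i k : ℝ)) := by
        simp
      rw [h2]; linarith
    have hoffnn : ∀ k ∈ univ.erase i, (0 : ℝ) ≤ -(L i k : ℝ) := by
      intro k hk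
      have hki : k ≠ i := (Finset.mem_erase.mp hk).1
      have : (L i k : ℝ) ≤ 0 := by exact_mod_cast hoff i k (fun h => hki h.symm)
      linarith
    set A : ℝ := ∑ k ∈ univ.erase i, (-(L i k : ℝ)) * |x k| with hA
    have he : c * x i = ∑ k ∈ univ.erase i, (-(L i k : ℝ)) * x k := by
      have h2 : ∑ k ∈ univ.erase i, (-(L i k : ℝ)) * x k
          = -∑ k ∈ univ.erase i, ((L i k : ℝ)) * x k := by
        simp [neg_mul]
      rw [h2]
      linarith [hsplit]
    have f1 : c * m ≤ A := by
      calc c * m = |c * x i| := by rw [abs_mul, abs_of_pos hcpos, hi]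
        _ = |∑ k ∈ univ.erase i, (-(L i k : ℝ)) * x k| := by rw [he]
        _ ≤ ∑ k ∈ univ.erase i, |(-(L i k : ℝ)) * x k| := Finset.abs_sum_le_sum_abs _ _
        _ = A := by
            rw [hA]
            apply Finset.sum_congr rfl
            intro k hk
            rw [abs_mul, abs_of_nonneg (hoffnn k hk)]
    have f2 : A ≤ (L i i : ℝ) * m := by
      rw [hA, ← hrs, Finset.sum_mul]
      apply Finset.sum_le_sum
      intro k hk
      exact mul_le_mul_of_nonneg_left (hi₀ k (mem_univ k)) (hoffnn k hk)
    have htε : t + ε ≤ 0 := by nlinarith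
    have ht0 : t = 0 := le_antisymm (by linarith) ht
    have hε0 : ε = 0 := le_antisymm (by linarith) hεnn
    have hij : i ≠ j := by
      intro h
      rw [hε, if_pos h] at hε0
      norm_num at hε0
    refine ⟨hij, ?_⟩
    intro k hk
    by_cases hki : k = i
    · rw [hki]; exact hi
    have hAeq : A = (L i i : ℝ) * m := by
      have h3 : (L i i : ℝ) * m ≤ c * m := by
        apply mul_le_mul_of_nonneg_right _ hmpos.le
        rw [hc]; linarith
      linarith
    have hsum0 : ∑ k' ∈ univ.erase i, (-(L i k' : ℝ)) * (m - |x k'|) = 0 := by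
      have h4 : ∑ k' ∈ univ.erase i, (-(L i k' : ℝ)) * (m - |x k'|)
          = (∑ k' ∈ univ.erase i, (-(L i k' : ℝ))) * m - A := by
        rw [Finset.sum_mul, hA, ← Finset.sum_sub_distrib]
        congr 1; ext k'; ring
      rw [h4, hrs, hAeq]; ring
    have hnn : ∀ k' ∈ univ.erase i, (0:ℝ) ≤ (-(L i k' : ℝ)) * (m - |x k'|) := by
      intro k' hk'
      exact mul_nonneg (hoffnn k' hk') (by linarith [hi₀ k' (mem_univ k')])
    have hmem : k ∈ univ.erase i := Finset.mem_erase.mpr ⟨hki, mem_univ k⟩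
    have hz := (Finset.sum_eq_zero_iff_of_nonneg hnn).mp hsum0 k hmem
    have hLk : (-(L i k : ℝ)) ≠ 0 := by
      simp only [neg_ne_zero]
      exact_mod_cast hk
    have := (mul_eq_zero.mp hz).resolve_left hLk
    linarith [sub_eq_zero.mp this]
  refine icb_connect hirr {k | |x k| = m} ⟨i₀, rfl⟩ ⟨j, fun hj => (hclosed j hj).1 rfl⟩ ?_
  intro i hi k hk
  by_contra hLik
  exact hk ((hclosed i hi).2 k hLik)

/-- Evaluation of the characteristic polynomial. -/
lemma my_eval_charpoly (M : Matrix (Fin n) (Fin n) ℝ) (t : ℝ) :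
    M.charpoly.eval t = (t • (1 : Matrix (Fin n) (Fin n) ℝ) - M).det := by
  rw [Matrix.charpoly, eval_det, Matrix.matPolyEquiv_charmatrix]
  congr 1
  rw [Polynomial.eval_sub, Polynomial.eval_X, Polynomial.eval_C]
  congr 1
  rw [Matrix.scalar_apply]
  ext i k
  by_cases h : i = k <;> simp [h, Matrix.one_apply, Matrix.diagonal_apply]

end Aux

/-- If `L` is an `n × n` ICB matrix, then `L` has rank `n - 1` over `ℚ`
and every entry of its adjugate matrix is strictly positive. -/
theorem rank_and_adjugate_pos_of_isICB (n : ℕ) (hn : 3 ≤ n)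
    (L : Matrix (Fin n) (Fin n) ℤ) (hL : IsICB n L) :
    (L.map ((↑) : ℤ → ℚ)).rank = n - 1 ∧ ∀ i j : Fin n, 0 < L.adjugate i j := by
  have hn0 : 0 < n := by omega
  obtain ⟨⟨hdiag, hoff, hrow, hcol⟩, hirr⟩ := hL
  have hLfull : IsICB n L := ⟨⟨hdiag, hoff, hrow, hcol⟩, hirr⟩
  have hones : (L.map ((↑) : ℤ → ℚ)).mulVec (fun _ => 1) = 0 := by
    ext i
    have h1 : ((∑ k, L i k : ℤ) : ℚ) = 0 := by rw [hrow i]; norm_num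
    push_cast at h1
    simpa [Matrix.mulVec, dotProduct, Matrix.map_apply] using h1
  have honesne : (fun _ => (1:ℚ) : Fin n → ℚ) ≠ 0 := by
    intro h
    have := congrFun h ⟨0, hn0⟩
    norm_num at this
  have hdet0 : L.det = 0 := by
    have h1 : (L.map ((↑) : ℤ → ℚ)).det = 0 :=
      Matrix.exists_mulVec_eq_zero_iff.mp ⟨fun _ => 1, honesne, hones⟩
    have h2 : ((L.det : ℤ) : ℚ) = (L.map ((↑) : ℤ → ℚ)).det := by
      simpa [RingHom.mapMatrix_apply] using RingHom.map_det (Int.castRingHom ℚ) L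
    rw [h1] at h2
    exact_mod_cast h2
  have hdiagadj : ∀ j : Fin n, 0 < L.adjugate j j := by
    intro j
    have hupd : L + Matrix.single j j 1
        = L.updateRow j (L j + Pi.single j 1) := by
      ext i k
      by_cases hij : i = j
      · subst hij
        simp [Matrix.updateRow_apply, Matrix.single, Matrix.add_apply,
          Pi.single_apply, eq_comm]
      · simp only [Matrix.add_apply, Matrix.updateRow_apply, if_neg hij,
          Matrix.single, Matrix.of_apply]
        have : ¬ (j = i ∧ j = k) := fun ⟨h1', _⟩ => hij h1'.symm
        simp [this]
    have hdetadd : (L + Matrix.single j j 1).det = L.adjugate j j := by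
      rw [hupd, Matrix.det_updateRow_add, Matrix.updateRow_eq_self, hdet0,
        ← Matrix.adjugate_apply]
      ring
    set N : Matrix (Fin n) (Fin n) ℝ :=
      L.map ((↑) : ℤ → ℝ) + Matrix.single j j 1 with hN
    have hmapN : ((L + Matrix.single j j 1).map ((↑) : ℤ → ℝ)) = N := by
      ext i k
      simp only [Matrix.map_apply, Matrix.add_apply, hN, Matrix.single,
        Matrix.of_apply]
      push_cast
      split <;> norm_num
    set P : Polynomial ℝ := Matrix.charpoly (-N) with hP
    have heval : ∀ s : ℝ, P.eval s = (s • (1 : Matrix (Fin n) (Fin n) ℝ) + N).det := by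
      intro s
      rw [hP, my_eval_charpoly, sub_neg_eq_add]
    have hne : ∀ s : ℝ, 0 ≤ s → P.eval s ≠ 0 := by
      intro s hs h0
      rw [heval] at h0
      obtain ⟨v, hv, hv0⟩ := Matrix.exists_mulVec_eq_zero_iff.mpr h0
      exact hv (icb_shift_ker hLfull j s hs v hv0)
    have hmonic : P.Monic := Matrix.charpoly_monic (-N)
    have hdeg : 0 < P.degree := by
      rw [← Polynomial.natDegree_pos_iff_degree_pos]
      have h1 : P.natDegree = Fintype.card (Fin n) := Matrix.charpoly_natDegree_eq_dim (-N)
      rw [h1, Fintype.card_fin]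
      omega
    have htop := Polynomial.tendsto_atTop_of_leadingCoeff_nonneg P hdeg
      (by rw [hmonic.leadingCoeff]; norm_num)
    have hev : ∀ᶠ s in Filter.atTop, 1 ≤ P.eval s := htop.eventually_ge_atTop 1
    obtain ⟨T, hT1, hT0⟩ := (hev.and (Filter.eventually_ge_atTop (0:ℝ))).exists
    have hpos0 : 0 < P.eval 0 := by
      rcases lt_trichotomy (P.eval 0) 0 with hneg | hz | hpos
      · exfalso
        have hc : ContinuousOn (fun s => P.eval s) (Set.Icc 0 T) :=
          (Polynomial.continuous P).continuousOn
        have hmem : (0:ℝ) ∈ Set.Icc (P.eval 0) (P.eval T) := ⟨hneg.le, by linarith⟩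
        obtain ⟨c, hc1, hc2⟩ := intermediate_value_Icc hT0 hc hmem
        exact hne c hc1.1 hc2
      · exact absurd hz (hne 0 le_rfl)
      · exact hpos
    have hdetN : 0 < N.det := by
      have h5 : P.eval 0 = N.det := by rw [heval]; simp
      linarith [hpos0, h5.symm.le, h5.le]
    have hcast : ((L + Matrix.single j j 1).det : ℝ)
        = N.det := by
      rw [← hmapN]
      simpa [RingHom.mapMatrix_apply] using
        RingHom.map_det (Int.castRingHom ℝ) (L + Matrix.single j j 1)
    have hfin : (0:ℝ) < ((L.adjugate j j : ℤ) : ℝ) := by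
      rw [← hdetadd, hcast]
      exact hdetN
    exact_mod_cast hfin
  have hconst : ∀ i j : Fin n, L.adjugate i j = L.adjugate j j := by
    intro i j
    have hmul : L * L.adjugate = 0 := by
      rw [Matrix.mul_adjugate, hdet0]
      simp
    set x : Fin n → ℚ := fun k => ((L.adjugate k j : ℤ) : ℚ) with hxdef
    have hx : (L.map ((↑) : ℤ → ℚ)).mulVec x = 0 := by
      ext i'
      have h1 : (∑ k, L i' k * L.adjugate k j) = 0 := by
        have := congrFun (congrFun hmul i') j
        simpa [Matrix.mul_apply] using this
      have h2 : ((∑ k, L i' k * L.adjugate k j : ℤ) : ℚ) = 0 := by rw [h1]; norm_num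
      push_cast at h2
      simpa [Matrix.mulVec, dotProduct, Matrix.map_apply, hxdef] using h2
    have h3 : ((L.adjugate i j : ℤ) : ℚ) = ((L.adjugate j j : ℤ) : ℚ) :=
      icb_ker_const hLfull hn0 x hx i j
    exact_mod_cast h3
  constructor
  · set A := L.map ((↑) : ℤ → ℚ) with hA
    have hkereq : LinearMap.ker A.mulVecLin
        = Submodule.span ℚ {(fun _ => 1 : Fin n → ℚ)} := by
      apply le_antisymm
      · intro x hxk
        have hx0 : A.mulVec x = 0 := by
          simpa [Matrix.mulVecLin_apply] using hxk
        have hcst := icb_ker_const hLfull hn0 x hx0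
        rw [Submodule.mem_span_singleton]
        refine ⟨x ⟨0, hn0⟩, ?_⟩
        ext k
        simp [hcst k ⟨0, hn0⟩]
      · rw [Submodule.span_singleton_le_iff_mem]
        simp only [LinearMap.mem_ker, Matrix.mulVecLin_apply]
        exact hones
    have hkerrank : Module.finrank ℚ (LinearMap.ker A.mulVecLin) = 1 := by
      rw [hkereq]
      exact finrank_span_singleton honesne
    have hrn := LinearMap.finrank_range_add_finrank_ker A.mulVecLin
    have hpi : Module.finrank ℚ (Fin n → ℚ) = n := by simp
    rw [hkerrank, hpi] at hrn
    have hrdef : A.rank = Module.finrank ℚ (LinearMap.range A.mulVecLin) := rfl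
    rw [hrdef]
    omega
  · intro i j
    rw [hconst i j]
    exact hdiagadj j
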